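/- Every arc set of a rooted binary phylogenetic network (excluding the root arc) admits a unique partition into maximal zig-zag trails. -/

import Mathlib

/-- A directed graph with a distinguished root, modelling a phylogenetic network. -/
structure Net (V : Type*) where
  verts : Set V
  root : V
  arcs : Set (V × V)

namespace Net

variable {V : Type*}

/-- In-degree of a vertex. -/
noncomputable def indeg (N : Net V) (v : V) : ℕ := {a ∈ N.arcs | a.2 = v}.ncard

/-- Out-degree of a vertex. -/
noncomputable def outdeg (N : Net V) (v : V) : ℕ := {a ∈ N.arcs | a.1 = v}.ncard

/-- A leaf: indegree 1, outdegree 0. -/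
def IsLeafV (N : Net V) (v : V) : Prop := v ∈ N.verts ∧ N.indeg v = 1 ∧ N.outdeg v = 0

/-- A tree vertex: indegree 1, outdegree 2. -/
def IsTreeV (N : Net V) (v : V) : Prop := v ∈ N.verts ∧ N.indeg v = 1 ∧ N.outdeg v = 2

/-- A reticulation: indegree 2, outdegree 1. -/
def IsReticV (N : Net V) (v : V) : Prop := v ∈ N.verts ∧ N.indeg v = 2 ∧ N.outdeg v = 1

/-- The arc relation of the network. -/
def arcRel (N : Net V) (u w : V) : Prop := (u, w) ∈ N.arcs

/-- `N` is a rooted binary phylogenetic network. -/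
def IsPhylo (N : Net V) : Prop :=
  N.verts.Finite ∧ N.arcs.Finite ∧ N.root ∈ N.verts ∧
  (∀ a ∈ N.arcs, a.1 ∈ N.verts ∧ a.2 ∈ N.verts) ∧
  N.indeg N.root = 0 ∧ N.outdeg N.root = 1 ∧
  (∀ v ∈ N.verts, v = N.root ∨ N.IsTreeV v ∨ N.IsReticV v ∨ N.IsLeafV v) ∧
  (∀ v : V, ¬ Relation.TransGen N.arcRel v v)

end Net

open Net
namespace Net

variable {V : Type*}

/-- A zig-zag trail in the arc set `A`: a nonempty sequence of distinct arcs of `A`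
in which consecutive arcs share a tail or share a head. -/
def IsZigZag (A : Set (V × V)) (l : List (V × V)) : Prop :=
  l ≠ [] ∧ l.Nodup ∧ (∀ a ∈ l, a ∈ A) ∧
    l.Chain' (fun a b => a.1 = b.1 ∨ a.2 = b.2)

/-- A maximal zig-zag trail: not properly contained (as an infix, up to reversal)
in any longer zig-zag trail in `A`. -/
def IsMaximalZigZag (A : Set (V × V)) (l : List (V × V)) : Prop :=
  IsZigZag A l ∧
    ∀ l' : List (V × V), IsZigZag A l' → (l <:+: l' ∨ l <:+: l'.reverse) →
      l'.length = l.length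

/-- The non-root arcs of `N`. -/
def nonRootArcs (N : Net V) : Set (V × V) := {a ∈ N.arcs | a.1 ≠ N.root}

/-- A zig-zag decomposition: a partition of all non-root arcs of `N` into
(arc sets of) maximal zig-zag trails. -/
def IsZigZagDecomp (N : Net V) (D : Set (Set (V × V))) : Prop :=
  (∀ B ∈ D, ∃ l : List (V × V),
      IsMaximalZigZag N.nonRootArcs l ∧ {a | a ∈ l} = B) ∧
  (∀ B ∈ D, ∀ B' ∈ D, B ≠ B' → Disjoint B B') ∧
  (∀ B ∈ D, B.Nonempty) ∧
  ⋃₀ D = N.nonRootArcs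

/-- A crown: even length at least 4, closing up (first and last arcs share
a tail or share a head). -/
def IsCrown (l : List (V × V)) : Prop :=
  4 ≤ l.length ∧ Even l.length ∧
    ∃ a b : V × V, l.head? = some a ∧ l.getLast? = some b ∧ (a.1 = b.1 ∨ a.2 = b.2)

/-- An M-fence: even length at least 2, not a crown, both end tails tree vertices. -/
def IsMFence (N : Net V) (l : List (V × V)) : Prop :=
  2 ≤ l.length ∧ Even l.length ∧ ¬ IsCrown l ∧
    ∃ a b : V × V, l.head? = some a ∧ l.getLast? = some b ∧
      N.IsTreeV a.1 ∧ N.IsTreeV b.1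

/-- An N-fence: odd length, exactly one of the two end tails is a reticulation. -/
def IsNFence (N : Net V) (l : List (V × V)) : Prop :=
  Odd l.length ∧
    ∃ a b : V × V, l.head? = some a ∧ l.getLast? = some b ∧
      ((N.IsReticV a.1 ∧ ¬ N.IsReticV b.1) ∨ (¬ N.IsReticV a.1 ∧ N.IsReticV b.1))

/-- A W-fence: even length at least 2, both end tails reticulations. -/
def IsWFence (N : Net V) (l : List (V × V)) : Prop :=
  2 ≤ l.length ∧ Even l.length ∧
    ∃ a b : V × V, l.head? = some a ∧ l.getLast? = some b ∧
      N.IsReticV a.1 ∧ N.IsReticV b.1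

end Net

namespace ZZAux

open Net Relation List

variable {V : Type*}

/-- Adjacency relation on arcs, restricted to an arc set `A`. -/
def Rel (A : Set (V × V)) (a b : V × V) : Prop :=
  a ∈ A ∧ b ∈ A ∧ a ≠ b ∧ (a.1 = b.1 ∨ a.2 = b.2)

lemma rel_symm (A : Set (V × V)) : Symmetric (Rel A) := by
  rintro a b ⟨ha, hb, hne, h⟩
  exact ⟨hb, ha, hne.symm, h.imp Eq.symm Eq.symm⟩

lemma outdeg_le_two {N : Net V} (hN : N.IsPhylo) {v : V} (hv : v ∈ N.verts) :
    N.outdeg v ≤ 2 := by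
  obtain ⟨-, -, -, -, -, hro, hclass, -⟩ := hN
  rcases hclass v hv with h | h | h | h
  · rw [h, hro]; omega
  · rw [h.2.2]
  · rw [h.2.2]; omega
  · rw [h.2.2]; omega

lemma indeg_le_two {N : Net V} (hN : N.IsPhylo) {v : V} (hv : v ∈ N.verts) :
    N.indeg v ≤ 2 := by
  obtain ⟨-, -, -, -, hri, -, hclass, -⟩ := hN
  rcases hclass v hv with h | h | h | h
  · rw [h, hri]; omega
  · rw [h.2.1]; omega
  · rw [h.2.1]
  · rw [h.2.1]; omega

lemma sharedTail {N : Net V} (hN : N.IsPhylo) {c x y : V × V}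
    (hc : c ∈ N.arcs) (hx : x ∈ N.arcs) (hy : y ∈ N.arcs)
    (hxc : x ≠ c) (hyc : y ≠ c) (h1 : x.1 = c.1) (h2 : y.1 = c.1) : x = y := by
  by_contra hxy
  have hfin : ({a ∈ N.arcs | a.1 = c.1}).Finite :=
    hN.2.1.subset (Set.sep_subset _ _)
  have h2' : 2 < ({a ∈ N.arcs | a.1 = c.1}).ncard :=
    (Set.two_lt_ncard hfin).mpr
      ⟨c, ⟨hc, rfl⟩, x, ⟨hx, h1⟩, y, ⟨hy, h2⟩, Ne.symm hxc, Ne.symm hyc, hxy⟩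
  have hle : N.outdeg c.1 ≤ 2 := outdeg_le_two hN (hN.2.2.2.1 c hc).1
  rw [Net.outdeg] at hle
  omega

lemma sharedHead {N : Net V} (hN : N.IsPhylo) {c x y : V × V}
    (hc : c ∈ N.arcs) (hx : x ∈ N.arcs) (hy : y ∈ N.arcs)
    (hxc : x ≠ c) (hyc : y ≠ c) (h1 : x.2 = c.2) (h2 : y.2 = c.2) : x = y := by
  by_contra hxy
  have hfin : ({a ∈ N.arcs | a.2 = c.2}).Finite :=
    hN.2.1.subset (Set.sep_subset _ _)
  have h2' : 2 < ({a ∈ N.arcs | a.2 = c.2}).ncard :=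
    (Set.two_lt_ncard hfin).mpr
      ⟨c, ⟨hc, rfl⟩, x, ⟨hx, h1⟩, y, ⟨hy, h2⟩, Ne.symm hxc, Ne.symm hyc, hxy⟩
  have hle : N.indeg c.2 ≤ 2 := indeg_le_two hN (hN.2.2.2.1 c hc).2
  rw [Net.indeg] at hle
  omega

lemma nbr_unique {N : Net V} (hN : N.IsPhylo) {c p q d : V × V}
    (hc : c ∈ N.arcs) (hp : p ∈ N.arcs) (hq : q ∈ N.arcs) (hd : d ∈ N.arcs)
    (hpc : p ≠ c) (hqc : q ≠ c) (hdc : d ≠ c) (hpq : p ≠ q)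
    (hpR : p.1 = c.1 ∨ p.2 = c.2) (hqR : q.1 = c.1 ∨ q.2 = c.2)
    (hdR : d.1 = c.1 ∨ d.2 = c.2) : d = p ∨ d = q := by
  rcases hdR with hdR | hdR
  · rcases hpR with hpR | hpR
    · exact Or.inl (sharedTail hN hc hd hp hdc hpc hdR hpR)
    · rcases hqR with hqR | hqR
      · exact Or.inr (sharedTail hN hc hd hq hdc hqc hdR hqR)
      · exact absurd (sharedHead hN hc hp hq hpc hqc hpR hqR) hpq
  · rcases hpR with hpR | hpR
    · rcases hqR with hqR | hqR
      · exact absurd (sharedTail hN hc hp hq hpc hqc hpR hqR) hpq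
      · exact Or.inr (sharedHead hN hc hd hq hdc hqc hdR hqR)
    · exact Or.inl (sharedHead hN hc hd hp hdc hpc hdR hpR)

end ZZAux

namespace ZZAux

open Net Relation List

variable {V : Type*}

lemma zigzag_reverse {A : Set (V × V)} {l : List (V × V)} (h : IsZigZag A l) :
    IsZigZag A l.reverse := by
  obtain ⟨hne, hnd, hmem, hch⟩ := h
  refine ⟨by simpa using hne, by simpa using hnd, by simpa using hmem, ?_⟩
  unfold List.Chain' at hch ⊢
  rw [List.isChain_reverse]
  exact hch.imp fun a b hab => hab.imp Eq.symm Eq.symm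

/-- A maximal zig-zag trail contains every arc adjacent to one of its arcs. -/
lemma maximal_closed {N : Net V} (hN : N.IsPhylo) {l : List (V × V)}
    (hl : IsMaximalZigZag N.nonRootArcs l) {c d : V × V} (hc : c ∈ l)
    (hR : Rel N.nonRootArcs c d) : d ∈ l := by
  by_contra hd
  obtain ⟨⟨hne, hnd, hmem, hch⟩, hmax⟩ := hl
  obtain ⟨hcA, hdA, hcd, hadj⟩ := hR
  obtain ⟨s, t, rfl⟩ : ∃ s t, l = s ++ c :: t := by
    obtain ⟨s, t, h⟩ := List.append_of_mem hc
    exact ⟨s, t, h⟩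
  rcases eq_or_ne s [] with rfl | hs
  · -- c is the head: extend on the left
    have hzz : IsZigZag N.nonRootArcs (d :: ([] ++ c :: t)) := by
      refine ⟨List.cons_ne_nil _ _, List.nodup_cons.mpr ⟨hd, hnd⟩, ?_, ?_⟩
      · intro a ha
        rcases List.mem_cons.mp ha with rfl | ha
        · exact hdA
        · exact hmem a ha
      · refine List.isChain_cons.mpr ⟨?_, hch⟩
        intro y hy
        simp only [List.nil_append, List.head?_cons, Option.mem_def,
          Option.some.injEq] at hy
        subst hy
        exact hadj.imp Eq.symm Eq.symm
    have := hmax _ hzz (Or.inl (List.suffix_cons d _).isInfix)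
    simp at this
  rcases eq_or_ne t [] with rfl | ht
  · -- c is the last: extend on the right
    have hzz : IsZigZag N.nonRootArcs ((s ++ [c]) ++ [d]) := by
      refine ⟨by simp, ?_, ?_, ?_⟩
      · rw [List.nodup_append']
        refine ⟨hnd, List.nodup_singleton _, ?_⟩
        intro a ha hb
        simp only [List.mem_singleton] at hb
        subst hb
        exact hd ha
      · intro a ha
        rcases List.mem_append.mp ha with ha | ha
        · exact hmem a ha
        · simp only [List.mem_singleton] at ha; subst ha; exact hdA
      · refine List.IsChain.append hch (List.isChain_singleton _) ?_
        intro x hx y hy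
        simp only [List.getLast?_concat, Option.mem_def, Option.some.injEq] at hx
        simp only [List.head?_cons, Option.mem_def, Option.some.injEq] at hy
        subst hx; subst hy
        exact hadj
    have := hmax _ hzz (Or.inl ((s ++ [c]).prefix_append [d]).isInfix)
    simp at this
  · -- c is interior: its two list neighbours use up both adjacencies
    set p := s.getLast hs with hp
    set q := t.head ht with hq
    have hps : p ∈ s := List.getLast_mem hs
    have hqt : q ∈ t := List.head_mem ht
    have hndis := (List.nodup_append'.mp hnd).2.2
    have hpc : p ≠ c := fun h => hndis hps (h ▸ (List.mem_cons_self : c ∈ c :: t))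
    have hpq : p ≠ q := fun h => hndis hps (h ▸ List.mem_cons_of_mem c hqt)
    have hqc : q ≠ c := fun h =>
      (List.nodup_cons.mp (List.nodup_append.mp hnd).2.1).1 (h ▸ hqt)
    have hchsplit := List.isChain_append.mp hch
    have hRpc : p.1 = c.1 ∨ p.2 = c.2 := by
      refine hchsplit.2.2 p ?_ c ?_
      · rw [List.getLast?_eq_getLast hs]; rfl
      · simp
    have hRcq : c.1 = q.1 ∨ c.2 = q.2 := by
      have := hchsplit.2.1
      rw [List.isChain_cons] at this
      refine this.1 q ?_
      rw [List.head?_eq_head ht]; rfl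
    have harcs : ∀ x ∈ N.nonRootArcs, x ∈ N.arcs := fun x hx => hx.1
    have hpA : p ∈ N.arcs := harcs p (hmem p (List.mem_append_left _ hps))
    have hqA : q ∈ N.arcs := harcs q (hmem q (List.mem_append_right _ (List.mem_cons_of_mem c hqt)))
    have := nbr_unique hN (harcs c hcA) hpA hqA (harcs d hdA) hpc hqc hcd.symm hpq
      hRpc (hRcq.imp Eq.symm Eq.symm) (hadj.imp Eq.symm Eq.symm)
    rcases this with rfl | rfl
    · exact hd (List.mem_append_left _ hps)
    · exact hd (List.mem_append_right _ (List.mem_cons_of_mem c hqt))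

end ZZAux

namespace ZZAux

open Net Relation List

variable {V : Type*}

lemma chain_reflTransGen {α : Type*} {S : α → α → Prop} :
    ∀ {a : α} {l : List α}, List.Chain S a l → ∀ x ∈ l, Relation.ReflTransGen S a x := by
  intro a l
  induction l generalizing a with
  | nil => intro _ x hx; simp at hx
  | cons b t ih =>
    intro h x hx
    unfold List.Chain at h
    rw [List.chain_cons] at h
    rcases List.mem_cons.mp hx with rfl | hx
    · exact Relation.ReflTransGen.single h.1
    · exact (Relation.ReflTransGen.single h.1).trans (ih h.2 x hx)

lemma zigzag_chain_rel {A : Set (V × V)} {l : List (V × V)}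
    (hl : IsZigZag A l) : List.Chain' (Rel A) l := by
  obtain ⟨hne, hnd, hmem, hch⟩ := hl
  unfold List.Chain' at hch ⊢
  rw [List.isChain_iff_getElem] at hch ⊢
  intro i hi
  refine ⟨hmem _ (List.getElem_mem _), hmem _ (List.getElem_mem _), ?_, hch i hi⟩
  intro h
  have := (List.Nodup.getElem_inj_iff hnd).mp h
  simp at this

lemma zigzag_connected {A : Set (V × V)} {l : List (V × V)}
    (hl : IsZigZag A l) {a x : V × V} (ha : a ∈ l) (hx : x ∈ l) :
    Relation.ReflTransGen (Rel A) a x := by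
  have hne := hl.1
  have hch := zigzag_chain_rel hl
  obtain ⟨h, t, rfl⟩ := List.exists_cons_of_ne_nil hne
  have hcht : List.Chain (Rel A) h t := hch
  have reach : ∀ y ∈ h :: t, Relation.ReflTransGen (Rel A) h y := by
    intro y hy
    rcases List.mem_cons.mp hy with rfl | hy
    · exact Relation.ReflTransGen.refl
    · exact chain_reflTransGen hcht y hy
  exact ((@Relation.ReflTransGen.stdSymm _ _ ⟨fun _ _ h => rel_symm A h⟩).symm _ _ (reach a ha)).trans (reach x hx)

/-- A maximal zig-zag trail spans the connected component of each of its arcs. -/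
lemma maximal_spans {N : Net V} (hN : N.IsPhylo) {l : List (V × V)}
    (hl : IsMaximalZigZag N.nonRootArcs l) {a : V × V} (ha : a ∈ l) :
    {x | x ∈ l} = {b | Relation.ReflTransGen (Rel N.nonRootArcs) a b} := by
  ext b
  constructor
  · intro hb
    exact zigzag_connected hl.1 ha hb
  · intro hb
    induction hb with
    | refl => exact ha
    | tail _ hbc ih => exact maximal_closed hN hl ih hbc

lemma exists_maximal {N : Net V} (hN : N.IsPhylo) {a : V × V}
    (ha : a ∈ N.nonRootArcs) :
    ∃ l, IsMaximalZigZag N.nonRootArcs l ∧ a ∈ l := by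
  classical
  have hfin : N.nonRootArcs.Finite := hN.2.1.subset fun x hx => hx.1
  set L : Set ℕ := {n | ∃ l, IsZigZag N.nonRootArcs l ∧ a ∈ l ∧ l.length = n} with hL
  have hLne : L.Nonempty := by
    refine ⟨1, [a], ⟨by simp, by simp, ?_, List.isChain_singleton _⟩, by simp, rfl⟩
    intro x hx; simp only [List.mem_singleton] at hx; subst hx; exact ha
  have hbdd : BddAbove L := by
    refine ⟨hfin.toFinset.card, ?_⟩
    rintro n ⟨l, ⟨-, hnd, hmem, -⟩, -, rfl⟩
    have hsub : l.toFinset ⊆ hfin.toFinset := by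
      intro x hx
      rw [Set.Finite.mem_toFinset]
      exact hmem x (List.mem_toFinset.mp hx)
    calc l.length = l.toFinset.card := (List.toFinset_card_of_nodup hnd).symm
      _ ≤ hfin.toFinset.card := Finset.card_le_card hsub
  have hmem := Nat.sSup_mem hLne hbdd
  obtain ⟨l, hzz, hal, hlen⟩ := hmem
  refine ⟨l, ⟨hzz, ?_⟩, hal⟩
  intro l' hl' hinf
  have hle : ∀ {m : List (V × V)}, IsZigZag N.nonRootArcs m → a ∈ m →
      m.length ≤ l.length := by
    intro m hm ham
    rw [hlen]
    exact le_csSup hbdd ⟨m, hm, ham, rfl⟩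
  rcases hinf with hinf | hinf
  · exact le_antisymm (hle hl' (hinf.subset hal)) (hinf.length_le.trans (by omega))
  · have h1 := hle (zigzag_reverse hl') (hinf.subset hal)
    have h2 := hinf.length_le
    simp only [List.length_reverse] at h1 h2
    omega

end ZZAux


open ZZAux

/-- The arc set of a rooted binary phylogenetic network (excluding the root arc)
admits a unique partition into maximal zig-zag trails. -/
theorem unique_zigzag_decomposition {V : Type*} (N : Net V) (hN : N.IsPhylo) :
    ∃! D : Set (Set (V × V)), N.IsZigZagDecomp D := by
  classical
  refine ⟨{B | ∃ l, IsMaximalZigZag N.nonRootArcs l ∧ {a | a ∈ l} = B},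
    ⟨?_, ?_, ?_, ?_⟩, ?_⟩
  · intro B hB; exact hB
  · rintro B ⟨l₁, h₁, rfl⟩ B' ⟨l₂, h₂, rfl⟩ hne
    rw [Set.disjoint_left]
    intro x hx hx'
    exact hne ((maximal_spans hN h₁ hx).trans (maximal_spans hN h₂ hx').symm)
  · rintro B ⟨l, hl, rfl⟩
    exact ⟨l.head hl.1.1, List.head_mem hl.1.1⟩
  · ext x
    constructor
    · rintro ⟨B, ⟨l, hl, rfl⟩, hx⟩
      exact hl.1.2.2.1 x hx
    · intro hx
      obtain ⟨l, hm, hxl⟩ := exists_maximal hN hx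
      exact ⟨{a | a ∈ l}, ⟨l, hm, rfl⟩, hxl⟩
  · intro D' hD'
    ext B
    constructor
    · intro hB
      exact hD'.1 B hB
    · rintro ⟨l, hm, rfl⟩
      set a := l.head hm.1.1 with hadef
      have hal : a ∈ l := List.head_mem hm.1.1
      have haA : a ∈ N.nonRootArcs := hm.1.2.2.1 a hal
      have : a ∈ ⋃₀ D' := by rw [hD'.2.2.2]; exact haA
      obtain ⟨B', hB', haB'⟩ := this
      obtain ⟨l₂, hm₂, hset₂⟩ := hD'.1 B' hB'
      have hal₂ : a ∈ l₂ := by rw [← hset₂] at haB'; exact haB'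
      have : {x | x ∈ l} = B' := by
        rw [← hset₂, maximal_spans hN hm hal, maximal_spans hN hm₂ hal₂]
      rw [this]
      exact hB'
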